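/- For every multivariate polynomial f ∈ ℚ[x₁,…,x_k] there exist rationals A ≥ 0 and B > 0, a natural number m, positive rationals ã₁,…,ã_m, a rational b̃ ≥ 0 with ∑_{i=1}^m ã_i + b̃ < 1, and nonempty products h₁,…,h_m of factors drawn from {x_j, 1 − x_j : 1 ≤ j ≤ k}, such that f + A = B · (∑_{i=1}^{m} ã_i · h_i + b̃) as polynomials. -/

import Mathlib

open MvPolynomial

namespace PolySubAux

variable {k : ℕ}

/-- An item: coefficient and exponent vectors. -/
abbrev Item (k : ℕ) := ℚ × (Fin k → ℕ) × (Fin k → ℕ)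

noncomputable def H (p : Item k) : MvPolynomial (Fin k) ℚ :=
  C p.1 * ∏ j, (X j ^ p.2.1 j * (1 - X j) ^ p.2.2 j)

def Ok (p : Item k) : Prop := 0 ≤ p.1 ∧ ∃ j, p.2.1 j ≠ 0 ∨ p.2.2 j ≠ 0

def S (f : MvPolynomial (Fin k) ℚ) : Prop :=
  ∃ (l : List (Item k)) (c : ℚ), (∀ p ∈ l, Ok p) ∧ f = (l.map H).sum + C c

lemma S_C (c : ℚ) : S (C c : MvPolynomial (Fin k) ℚ) :=
  ⟨[], c, by simp, by simp⟩

lemma S_add {f g : MvPolynomial (Fin k) ℚ} (hf : S f) (hg : S g) : S (f + g) := by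
  obtain ⟨l₁, c₁, h₁, e₁⟩ := hf
  obtain ⟨l₂, c₂, h₂, e₂⟩ := hg
  refine ⟨l₁ ++ l₂, c₁ + c₂, ?_, ?_⟩
  · intro p hp
    rcases List.mem_append.1 hp with h | h
    · exact h₁ p h
    · exact h₂ p h
  · rw [e₁, e₂]
    simp [List.map_append, List.sum_append, C_add]
    ring

lemma S_smul {f : MvPolynomial (Fin k) ℚ} (r : ℚ) (hr : 0 ≤ r) (hf : S f) :
    S (C r * f) := by
  obtain ⟨l, c, hl, ef⟩ := hf
  refine ⟨l.map (fun p => (r * p.1, p.2)), r * c, ?_, ?_⟩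
  · intro p hp
    obtain ⟨q, hq, rfl⟩ := List.mem_map.1 hp
    exact ⟨mul_nonneg hr (hl q hq).1, (hl q hq).2⟩
  · rw [ef]
    have : ∀ q : Item k, H ((r * q.1, q.2) : Item k) = C r * H q := by
      intro q; simp [H, C_mul]; ring
    simp only [List.map_map, Function.comp_def, this]
    rw [List.sum_map_mul_left l H (C r)]
    simp [mul_add, C_mul]

lemma S_term : ∀ (n : ℕ) (d : Fin k → ℕ), (∑ j, d j) = n → ∀ q : ℚ,
    S (C q * ∏ j, (X j : MvPolynomial (Fin k) ℚ) ^ d j) := by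
  intro n
  induction n using Nat.strong_induction_on with
  | _ n ih =>
    intro d hd q
    by_cases hd0 : ∀ j, d j = 0
    · have h1 : (∏ j, (X j : MvPolynomial (Fin k) ℚ) ^ d j) = 1 := by
        apply Finset.prod_eq_one; intro j _; rw [hd0 j, pow_zero]
      rw [h1, mul_one]; exact S_C q
    · push_neg at hd0
      obtain ⟨j, hj⟩ := hd0
      by_cases hq : 0 ≤ q
      · refine ⟨[(q, d, 0)], 0, ?_, ?_⟩
        · intro p hp
          simp only [List.mem_singleton] at hp
          subst hp
          exact ⟨hq, j, Or.inl hj⟩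
        · simp [H]
      · -- q < 0
        push_neg at hq
        set d' : Fin k → ℕ := Function.update d j (d j - 1) with hd'def
        have hgd : (fun j' => (X j' : MvPolynomial (Fin k) ℚ) ^ d' j')
            = Function.update (fun j' => (X j' : MvPolynomial (Fin k) ℚ) ^ d j') j
              (X j ^ (d j - 1)) := by
          funext j'
          by_cases h : j' = j
          · subst h; simp [hd'def]
          · simp [hd'def, Function.update_of_ne h]
        have hsplit : (∏ j', (X j' : MvPolynomial (Fin k) ℚ) ^ d j')
            = (∏ j', (X j' : MvPolynomial (Fin k) ℚ) ^ d' j') * X j := by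
          rw [hgd, Finset.prod_update_of_mem (Finset.mem_univ j),
            Finset.prod_eq_prod_diff_singleton_mul (Finset.mem_univ j)
              (fun j' => (X j' : MvPolynomial (Fin k) ℚ) ^ d j')]
          have hdj : (X j : MvPolynomial (Fin k) ℚ) ^ d j = X j ^ (d j - 1) * X j := by
            rw [← pow_succ]
            congr 1
            omega
          rw [hdj]
          ring
        have hH : H ((-q, d', Pi.single j 1) : Item k)
            = C (-q) * (∏ j', (X j' : MvPolynomial (Fin k) ℚ) ^ d' j') * (1 - X j) := by
          rw [H]
          simp only
          rw [Finset.prod_mul_distrib]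
          have h2 : (∏ j', ((1 : MvPolynomial (Fin k) ℚ) - X j') ^ Pi.single j 1 j') = 1 - X j := by
            rw [Finset.prod_eq_single j]
            · simp
            · intro b _ hb; simp [Pi.single_eq_of_ne hb]
            · simp
          rw [h2]; ring
        have hlt : (∑ j', d' j') < n := by
          rw [← hd]
          apply Finset.sum_lt_sum
          · intro i _
            by_cases h : i = j
            · subst h
              simp only [hd'def, Function.update_self]
              omega
            · simp [hd'def, Function.update_of_ne h]
          · refine ⟨j, Finset.mem_univ j, ?_⟩
            simp only [hd'def, Function.update_self]
            omega
        have h1 : S (H ((-q, d', Pi.single j 1) : Item k)) := by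
          refine ⟨[(-q, d', Pi.single j 1)], 0, ?_, by simp⟩
          intro p hp
          simp only [List.mem_singleton] at hp
          subst hp
          exact ⟨by dsimp only; linarith, j, Or.inr (by simp)⟩
        have h2 := ih _ hlt d' rfl q
        have key : C q * ∏ j', (X j' : MvPolynomial (Fin k) ℚ) ^ d j'
            = H ((-q, d', Pi.single j 1) : Item k)
              + C q * ∏ j', (X j' : MvPolynomial (Fin k) ℚ) ^ d' j' := by
          rw [hH, hsplit, map_neg]
          ring
        rw [key]
        exact S_add h1 h2

lemma S_all (f : MvPolynomial (Fin k) ℚ) : S f := by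
  rw [f.as_sum]
  apply Finset.sum_induction _ S (fun a b => S_add) (by simpa using S_C (0 : ℚ))
  intro d _
  have h1 : (monomial d (coeff d f)) = C (coeff d f) * ∏ j, (X j : MvPolynomial (Fin k) ℚ) ^ d j := by
    rw [monomial_eq]
    congr 1
    exact Finsupp.prod_fintype _ _ (fun j => pow_zero _)
  rw [h1]
  exact S_term _ (fun j => d j) rfl _

lemma filter_sum (l : List (Item k)) :
    ((l.filter fun p => !decide (p.1 = 0)).map H).sum = (l.map H).sum := by
  induction l with
  | nil => simp
  | cons p l ih =>
    rw [List.filter_cons]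
    by_cases h : p.1 = 0
    · simp [h, ih, H]
    · simp [h, ih]

end PolySubAux

/-- Normalization step in the paper's Proposition 8: for every `f ∈ ℚ[x₁,…,x_k]` there are
rationals `A ≥ 0`, `B > 0`, positive rationals `a₁,…,a_m`, a rational `b ≥ 0` with
`∑ i, a i + b < 1`, and nonempty products `h i = ∏ j, x_j ^ e i j * (1 - x_j) ^ e' i j`
such that `f + A = B * (∑ i, a i • h i + b)` as polynomials. -/
theorem poly_subprobability_form (k : ℕ) (f : MvPolynomial (Fin k) ℚ) :
    ∃ (A B : ℚ) (m : ℕ) (a : Fin m → ℚ) (b : ℚ) (e e' : Fin m → Fin k → ℕ),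
      0 ≤ A ∧ 0 < B ∧
      (∀ i, 0 < a i) ∧ 0 ≤ b ∧ (∑ i, a i) + b < 1 ∧
      (∀ i, ∃ j, e i j ≠ 0 ∨ e' i j ≠ 0) ∧
      f + C A =
        C B * ((∑ i, C (a i) * ∏ j, (X j ^ e i j * (1 - X j) ^ e' i j)) + C b) := by
  classical
  obtain ⟨l₀, c, hl₀, hf⟩ := PolySubAux.S_all f
  set l : List (PolySubAux.Item k) := l₀.filter (fun p => !decide (p.1 = 0)) with hldef
  have hmem : ∀ p ∈ l, 0 < p.1 ∧ ∃ j, p.2.1 j ≠ 0 ∨ p.2.2 j ≠ 0 := by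
    intro p hp
    rw [hldef, List.mem_filter] at hp
    obtain ⟨hp₀, hp₁⟩ := hp
    have hne : p.1 ≠ 0 := by simpa using hp₁
    exact ⟨lt_of_le_of_ne (hl₀ p hp₀).1 (Ne.symm hne), (hl₀ p hp₀).2⟩
  have hf' : f = (l.map PolySubAux.H).sum + C c := by
    rw [hf, ← PolySubAux.filter_sum l₀]
  set A : ℚ := max 0 (-c) with hAdef
  have hA : 0 ≤ A := le_max_left 0 (-c)
  set c' : ℚ := c + A with hc'def
  have hc' : 0 ≤ c' := by
    have := le_max_right 0 (-c)
    simp only [hc'def, hAdef]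
    linarith
  set T : ℚ := (l.map (fun p => p.1)).sum with hTdef
  have hT : 0 ≤ T := by
    apply List.sum_nonneg
    intro x hx
    obtain ⟨p, hp, rfl⟩ := List.mem_map.1 hx
    exact (hmem p hp).1.le
  set B : ℚ := T + c' + 1 with hBdef
  have hB : 0 < B := by rw [hBdef]; linarith
  refine ⟨A, B, l.length, fun i => l[i.1].1 / B, c' / B,
    fun i => l[i.1].2.1, fun i => l[i.1].2.2, hA, hB, ?_, ?_, ?_, ?_, ?_⟩
  · intro i
    exact div_pos (hmem _ (l.getElem_mem i.2)).1 hB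
  · exact div_nonneg hc' hB.le
  · have hs : (∑ i : Fin l.length, l[i.1].1 / B) = T / B := by
      rw [← Finset.sum_div]
      congr 1
      exact Fin.sum_univ_fun_getElem l (fun p => p.1)
    rw [hs, ← add_div, div_lt_one hB]
    rw [hBdef]
    linarith
  · intro i
    exact (hmem _ (l.getElem_mem i.2)).2
  · have hitem : ∀ p : PolySubAux.Item k,
        C B * (C (p.1 / B) * ∏ j, (X j ^ p.2.1 j * (1 - X j) ^ p.2.2 j))
          = PolySubAux.H p := by
      intro p
      rw [PolySubAux.H, ← mul_assoc, ← C_mul]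
      congr 2
      field_simp
    rw [mul_add, Finset.mul_sum]
    have hsum : (∑ i : Fin l.length,
        C B * (C (l[i.1].1 / B) * ∏ j, (X j ^ l[i.1].2.1 j * (1 - X j) ^ l[i.1].2.2 j)))
          = (l.map PolySubAux.H).sum := by
      rw [← Fin.sum_univ_fun_getElem l PolySubAux.H]
      exact Finset.sum_congr rfl fun i _ => hitem l[i.1]
    rw [hsum, ← C_mul]
    have hcc : B * (c' / B) = c' := by field_simp
    rw [hcc, hf', hc'def, C_add]
    ring
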